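/- Let G act continuously on a compact Hausdorff space X, let μ be a probability measure on G whose support generates G as a semigroup, and let ν be a μ-stationary Borel probability measure on X. If every G-orbit in X is infinite, then ν has no atoms. -/

import Mathlib

open MeasureTheory

/-- a μ-stationary probability measure for a continuous action on a
compact Hausdorff space with all orbits infinite has no atoms. -/
theorem stmt7 {G X : Type*} [Group G] [Countable G]
    [TopologicalSpace X] [CompactSpace X] [T2Space X]
    [MeasurableSpace X] [BorelSpace X]
    [MulAction G X] (hcont : ∀ g : G, Continuous fun x : X => g • x)
    (μ : G → ENNReal) (hμ1 : (∑' g, μ g) = 1)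
    (hgen : Subsemigroup.closure {g : G | μ g ≠ 0} = ⊤)
    (ν : Measure X) [IsProbabilityMeasure ν]
    (hstat : ∀ A : Set X, MeasurableSet A →
      ν A = ∑' g : G, μ g * ν ((fun x : X => g • x) ⁻¹' A))
    (horb : ∀ x : X, (MulAction.orbit G x).Infinite) :
    ∀ x : X, ν {x} = 0 := by
  by_contra h
  push_neg at h
  obtain ⟨x₀, hx₀⟩ := h
  -- the supremum of atom masses
  set m : ENNReal := ⨆ y : X, ν {y} with hm
  have hm_pos : 0 < m := lt_of_lt_of_le (pos_iff_ne_zero.mpr hx₀) (le_iSup (fun y : X => ν {y}) x₀)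
  have hle1 : ∀ y : X, ν {y} ≤ 1 := fun y => prob_le_one
  have hm_le1 : m ≤ 1 := iSup_le hle1
  have hm_ne_top : m ≠ ⊤ := (lt_of_le_of_lt hm_le1 ENNReal.one_lt_top).ne
  have hle_m : ∀ y : X, ν {y} ≤ m := fun y => le_iSup (fun y : X => ν {y}) y
  -- the supremum is attained
  have hhalf_pos : 0 < m / 2 := ENNReal.half_pos hm_pos.ne'
  have hfin : {y : X | m / 2 ≤ ν {y}}.Finite := by
    have := MeasureTheory.Measure.finite_const_le_meas_of_disjoint_iUnion (ι := X) ν hhalf_pos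
      (As := fun y => {y}) (fun y => measurableSet_singleton y)
      (fun a b hab => by simpa [Set.disjoint_singleton] using hab)
      (by rw [Set.iUnion_of_singleton]; exact (measure_lt_top ν _).ne)
    exact this
  have hne : {y : X | m / 2 ≤ ν {y}}.Nonempty := by
    obtain ⟨y, hy⟩ := lt_iSup_iff.mp (ENNReal.half_lt_self hm_pos.ne' hm_ne_top)
    exact ⟨y, hy.le⟩
  obtain ⟨y₀, hy₀mem, hy₀max⟩ :=
    Set.exists_max_image _ (fun y : X => ν {y}) hfin hne
  have hy₀ : ν {y₀} = m := by
    refine le_antisymm (hle_m y₀) (iSup_le fun y => ?_)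
    by_cases hy : m / 2 ≤ ν {y}
    · exact hy₀max y hy
    · exact le_trans (le_of_not_ge hy) hy₀mem
  -- stationarity propagates maximal atoms
  have hpre : ∀ (g : G) (y : X), ((fun x : X => g • x) ⁻¹' {y}) = {g⁻¹ • y} := by
    intro g y
    ext z
    simp [Set.mem_preimage, eq_inv_smul_iff, eq_comm]
  have hμ_ne_top : ∀ g : G, μ g ≠ ⊤ := by
    intro g
    intro htop
    have : (∑' g, μ g) = ⊤ := ENNReal.tsum_eq_top_of_eq_top ⟨g, htop⟩
    rw [hμ1] at this
    exact ENNReal.one_ne_top this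
  have key : ∀ (y : X), ν {y} = m → ∀ g : G, μ g ≠ 0 → ν {g⁻¹ • y} = m := by
    intro y hy g hg
    by_contra hne'
    have hlt : ν {g⁻¹ • y} < m := lt_of_le_of_ne (hle_m _) hne'
    have hstat' : ν {y} = ∑' g' : G, μ g' * ν {g'⁻¹ • y} := by
      rw [hstat {y} (measurableSet_singleton y)]
      exact tsum_congr fun g' => by rw [hpre g' y]
    have hsum_m : (∑' g' : G, μ g' * m) = m := by
      rw [ENNReal.tsum_mul_right, hμ1, one_mul]
    have hlt2 : (∑' g' : G, μ g' * ν {g'⁻¹ • y}) < ∑' g' : G, μ g' * m := by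
      refine ENNReal.tsum_lt_tsum (i := g) ?_ (fun g' => mul_le_mul_right (hle_m _) _) ?_
      · rw [← hstat']
        rw [hy]
        exact hm_ne_top
      · exact ENNReal.mul_lt_mul_right hg (hμ_ne_top g) hlt
    rw [← hstat', hy, hsum_m] at hlt2
    exact lt_irrefl m hlt2
  -- propagate along the semigroup generated by the support
  have hall : ∀ g : G, ∀ y : X, ν {y} = m → ν {g⁻¹ • y} = m := by
    intro g
    have hg : g ∈ Subsemigroup.closure {g : G | μ g ≠ 0} := by
      rw [hgen]; trivial
    refine Subsemigroup.closure_induction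
      (p := fun x _ => ∀ y : X, ν {y} = m → ν {x⁻¹ • y} = m) ?_ ?_ hg
    · intro x hx y hy
      exact key y hy x hx
    · intro a b _ _ ha hb y hy
      have : (a * b)⁻¹ • y = b⁻¹ • (a⁻¹ • y) := by
        rw [mul_inv_rev, mul_smul]
      rw [this]
      exact hb _ (ha y hy)
  -- every point of the orbit of y₀ has mass m
  have horbm : ∀ z ∈ MulAction.orbit G y₀, ν {z} = m := by
    rintro z ⟨g, rfl⟩
    have := hall g⁻¹ y₀ hy₀
    rwa [inv_inv] at this
  -- the orbit is infinite: contradiction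
  have hinf := horb y₀
  haveI : Infinite (MulAction.orbit G y₀) := hinf.to_subtype
  let f : ℕ ↪ (MulAction.orbit G y₀) := hinf.natEmbedding _
  let e : ℕ ↪ X := f.trans (Function.Embedding.subtype _)
  have hmem : ∀ n : ℕ, (e n : X) ∈ MulAction.orbit G y₀ := fun n => (f n).2
  have hdisj : Pairwise (Function.onFun Disjoint fun n : ℕ => ({e n} : Set X)) := by
    intro a b hab
    simp only [Function.onFun, Set.disjoint_singleton]
    exact fun hEq => hab (e.injective hEq)
  have hcalc : ν (⋃ n : ℕ, ({e n} : Set X)) = ∑' n : ℕ, ν {e n} :=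
    measure_iUnion hdisj fun n => measurableSet_singleton _
  have htop : (∑' n : ℕ, ν {e n}) = ⊤ := by
    have : ∀ n : ℕ, ν {e n} = m := fun n => horbm _ (hmem n)
    simp only [this]
    exact ENNReal.tsum_const_eq_top_of_ne_zero hm_pos.ne'
  have hle : ν (⋃ n : ℕ, ({e n} : Set X)) ≤ 1 := prob_le_one
  rw [hcalc, htop] at hle
  exact ENNReal.one_lt_top.not_ge hle
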